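/- Over an algebraically closed field of characteristic zero, a triangular system p_1, ..., p_d has exactly n_1 ⋯ n_d distinct common zeros if and only if the quotient ring K[x_1, ..., x_d]/(p_1, ..., p_d) is reduced (has no nonzero nilpotents). -/

import Mathlib

open MvPolynomial

/-- A triangular system: `p k` is monic of degree `n k` in the variable `x k`,
with all other terms involving only variables `x j`, `j ≤ k`, and of degree
less than `n k` in `x k`. -/
def IsTriangular {K : Type*} [CommRing K] {d : ℕ} (n : Fin d → ℕ)
    (p : Fin d → MvPolynomial (Fin d) K) : Prop :=
  ∀ k : Fin d, ∃ q : MvPolynomial (Fin d) K,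
    (∀ j ∈ q.vars, j ≤ k) ∧ q.degreeOf k < n k ∧ p k = X k ^ n k + q

/-- The set of common zeros of the system in `K^d`. -/
def zeroSet {K : Type*} [CommRing K] {d : ℕ}
    (p : Fin d → MvPolynomial (Fin d) K) : Set (Fin d → K) :=
  {a : Fin d → K | ∀ k, eval a (p k) = 0}

set_option linter.unusedSectionVars false
set_option maxHeartbeats 1000000
set_option synthInstance.maxHeartbeats 400000

section BasisSide
variable {K : Type*} [Field K]

def IsUTri {d : ℕ} (n : Fin d → ℕ) (p : Fin d → MvPolynomial (Fin d) K) : Prop :=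
  ∀ k : Fin d, ∃ q : MvPolynomial (Fin d) K,
    (∀ j ∈ q.vars, k ≤ j) ∧ q.degreeOf k < n k ∧ p k = MvPolynomial.X k ^ n k + q

lemma mem_vars_iff_degreeOf_ne {σ R : Type*} [CommSemiring R] [DecidableEq σ]
    (i : σ) (p : MvPolynomial σ R) : i ∈ p.vars ↔ p.degreeOf i ≠ 0 := by
  rw [MvPolynomial.vars_def, MvPolynomial.degreeOf_def, Multiset.mem_toFinset,
    ← Multiset.count_pos, Nat.pos_iff_ne_zero]

lemma phi_rename_succ {d : ℕ} (x : MvPolynomial (Fin d) K) :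
    finSuccEquiv K d (rename Fin.succ x) = Polynomial.C x := by
  have h : ((finSuccEquiv K d).toAlgHom.comp
        (rename (Fin.succ : Fin d → Fin (d+1))) : MvPolynomial (Fin d) K →ₐ[K] _).toRingHom =
      (Polynomial.C : MvPolynomial (Fin d) K →+* Polynomial (MvPolynomial (Fin d) K)) := by
    apply MvPolynomial.ringHom_ext
    · intro c
      simp [MvPolynomial.finSuccEquiv_apply]
    · intro i
      simp [MvPolynomial.finSuccEquiv_X_succ]
  have := RingHom.congr_fun h x
  simpa using this

theorem utri_step {d : ℕ} (n : Fin (d+1) → ℕ) (p : Fin (d+1) → MvPolynomial (Fin (d+1)) K)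
    (htri : IsUTri n p)
    (ih : ∀ (n' : Fin d → ℕ) (p' : Fin d → MvPolynomial (Fin d) K), IsUTri n' p' →
      Nonempty (Module.Basis (Fin (∏ k, n' k)) K
        (MvPolynomial (Fin d) K ⧸ Ideal.span (Set.range p')))) :
    Nonempty (Module.Basis (Fin (∏ k, n k)) K
      (MvPolynomial (Fin (d+1)) K ⧸ Ideal.span (Set.range p))) := by
  classical
  choose q hvars hdeg hdecomp using htri
  set φ := MvPolynomial.finSuccEquiv K d with hφ
  -- the variables of p k.succ avoid 0
  have hsub : ∀ k : Fin d, ↑(q k.succ).vars ⊆ Set.range (Fin.succ : Fin d → Fin (d+1)) := by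
    intro k j hj
    have h1 : k.succ ≤ j := hvars k.succ j hj
    have h2 : j ≠ 0 := by
      rintro rfl
      exact Fin.succ_ne_zero k (Fin.le_zero_iff.mp h1)
    obtain ⟨i, rfl⟩ := Fin.exists_succ_eq.mpr h2
    exact ⟨i, rfl⟩
  choose q' hq' using fun k => MvPolynomial.exists_rename_eq_of_vars_subset_range
    (q k.succ) Fin.succ (Fin.succ_injective d) (hsub k)
  set r : Fin d → MvPolynomial (Fin d) K :=
    fun k => MvPolynomial.X k ^ n k.succ + q' k with hrdef
  have hr : ∀ k, rename Fin.succ (r k) = p k.succ := by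
    intro k
    rw [hrdef]
    simp only [map_add, map_pow, rename_X, hq', hdecomp]
  -- r is upper triangular
  have hutri : IsUTri (fun k => n k.succ) r := by
    intro k
    refine ⟨q' k, ?_, ?_, rfl⟩
    · intro j hj
      have h1 : (q' k).degreeOf j ≠ 0 := (mem_vars_iff_degreeOf_ne j _).mp hj
      have h2 : (q k.succ).degreeOf j.succ ≠ 0 := by
        rw [← hq' k, MvPolynomial.degreeOf_rename_of_injective (Fin.succ_injective d)]
        exact h1
      have h3 := hvars k.succ j.succ ((mem_vars_iff_degreeOf_ne _ _).mpr h2)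
      exact Fin.succ_le_succ_iff.mp h3
    · have : (q' k).degreeOf k = (q k.succ).degreeOf k.succ := by
        rw [← hq' k, MvPolynomial.degreeOf_rename_of_injective (Fin.succ_injective d)]
      rw [this]
      exact hdeg k.succ
  obtain ⟨bB⟩ := ih _ r hutri
  set J : Ideal (MvPolynomial (Fin d) K) := Ideal.span (Set.range r) with hJ
  set B := MvPolynomial (Fin d) K ⧸ J with hB
  letI : CommRing B := Ideal.Quotient.commRing J
  -- the polynomial f
  set f : Polynomial (MvPolynomial (Fin d) K) := φ (p 0) with hfdef
  have hf : f = Polynomial.X ^ n 0 + φ (q 0) := by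
    rw [hfdef, hdecomp 0, map_add, map_pow, MvPolynomial.finSuccEquiv_X_zero]
  have hdegq : (φ (q 0)).degree < (n 0 : WithBot ℕ) := by
    refine lt_of_le_of_lt Polynomial.degree_le_natDegree ?_
    rw [Nat.cast_lt, MvPolynomial.natDegree_finSuccEquiv]
    exact hdeg 0
  have hmonic : f.Monic := by
    rw [hf]
    exact Polynomial.monic_X_pow_add hdegq
  have hdegf : f.natDegree = n 0 := by
    have h1 : f.degree = (n 0 : WithBot ℕ) := by
      rw [hf, Polynomial.degree_add_eq_left_of_degree_lt, Polynomial.degree_X_pow]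
      rwa [Polynomial.degree_X_pow]
    exact Polynomial.natDegree_eq_of_degree_eq_some h1
  -- the image ideal
  set Imap : Ideal (Polynomial (MvPolynomial (Fin d) K)) :=
    Ideal.map (φ : MvPolynomial (Fin (d+1)) K →+* Polynomial (MvPolynomial (Fin d) K))
      (Ideal.span (Set.range p)) with hImap
  have hIdeal : Imap = Ideal.map (Polynomial.C : MvPolynomial (Fin d) K →+* Polynomial (MvPolynomial (Fin d) K)) J ⊔ Ideal.span {f} := by
    rw [hImap, Ideal.map_span, ← Set.range_comp]
    have h1 : Set.range (⇑(φ : MvPolynomial (Fin (d+1)) K →+* Polynomial (MvPolynomial (Fin d) K)) ∘ p) =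
        insert f (Set.range fun k : Fin d => Polynomial.C (r k)) := by
      rw [Fin.range_fin_succ]
      have ht : Fin.tail (⇑(φ : MvPolynomial (Fin (d+1)) K →+* Polynomial (MvPolynomial (Fin d) K)) ∘ p) =
          fun k : Fin d => Polynomial.C (r k) := by
        funext k
        show φ (p k.succ) = _
        rw [← hr k, phi_rename_succ]
      rw [ht]
      rfl
    rw [h1, Ideal.span_insert, hJ, Ideal.map_span, ← Set.range_comp, sup_comm]
    rfl
  -- chain of algebra equivalences
  let E1 : (MvPolynomial (Fin (d+1)) K ⧸ Ideal.span (Set.range p)) ≃ₐ[K]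
      (Polynomial (MvPolynomial (Fin d) K) ⧸ Imap) :=
    Ideal.quotientEquivAlg (Ideal.span (Set.range p)) Imap φ rfl
  let E2 : (Polynomial (MvPolynomial (Fin d) K) ⧸ Imap) ≃ₐ[K]
      (Polynomial (MvPolynomial (Fin d) K) ⧸ (Ideal.map (Polynomial.C : MvPolynomial (Fin d) K →+* Polynomial (MvPolynomial (Fin d) K)) J ⊔ Ideal.span {f})) :=
    Ideal.quotientEquivAlgOfEq K hIdeal
  let E3 := (DoubleQuot.quotQuotEquivQuotSupₐ K
    (Ideal.map (Polynomial.C : MvPolynomial (Fin d) K →+* Polynomial (MvPolynomial (Fin d) K)) J) (Ideal.span {f})).symm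
  -- the K-algebra equiv B[X] ≃ Polynomial R / map C J
  let E4 : Polynomial B ≃ₐ[K] (Polynomial (MvPolynomial (Fin d) K) ⧸ Ideal.map (Polynomial.C : MvPolynomial (Fin d) K →+* Polynomial (MvPolynomial (Fin d) K)) J) :=
    AlgEquiv.ofRingEquiv (f := J.polynomialQuotientEquivQuotientPolynomial) (by
      intro c
      have h1 : (algebraMap K (Polynomial B)) c =
          Polynomial.C (Ideal.Quotient.mk J (algebraMap K (MvPolynomial (Fin d) K) c)) := rfl
      have h2 : Polynomial.C (Ideal.Quotient.mk J (algebraMap K (MvPolynomial (Fin d) K) c)) =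
          (Polynomial.C (algebraMap K (MvPolynomial (Fin d) K) c)).map (Ideal.Quotient.mk J) := by
        rw [Polynomial.map_C]
      rw [h1, h2, Ideal.polynomialQuotientEquivQuotientPolynomial_map_mk]
      rfl)
  set fbar : Polynomial B := f.map (Ideal.Quotient.mk J) with hfbar
  have hIdeal2 : (Ideal.span {f}).map
      (Ideal.Quotient.mkₐ K (Ideal.map (Polynomial.C : MvPolynomial (Fin d) K →+* Polynomial (MvPolynomial (Fin d) K)) J)) =
      (Ideal.span {fbar}).map (E4 : Polynomial B →+* _) := by
    simp only [Ideal.map_span, Set.image_singleton]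
    have hE4f : (E4 : Polynomial B →+* _) fbar =
        Ideal.Quotient.mk (Ideal.map (Polynomial.C : MvPolynomial (Fin d) K →+* Polynomial (MvPolynomial (Fin d) K)) J) f := by
      show J.polynomialQuotientEquivQuotientPolynomial (f.map (Ideal.Quotient.mk J)) = _
      rw [Ideal.polynomialQuotientEquivQuotientPolynomial_map_mk]
    rw [hE4f]
    simp [Ideal.Quotient.mkₐ_eq_mk]
  letI : CommRing (Polynomial (MvPolynomial (Fin d) K) ⧸ Ideal.map (Polynomial.C : MvPolynomial (Fin d) K →+* Polynomial (MvPolynomial (Fin d) K)) J) := Ideal.Quotient.commRing _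
  let E5 : (Polynomial B ⧸ Ideal.span {fbar}) ≃ₐ[K]
      ((Polynomial (MvPolynomial (Fin d) K) ⧸ Ideal.map (Polynomial.C : MvPolynomial (Fin d) K →+* Polynomial (MvPolynomial (Fin d) K)) J) ⧸
        (Ideal.span {f}).map (Ideal.Quotient.mkₐ K (Ideal.map (Polynomial.C : MvPolynomial (Fin d) K →+* Polynomial (MvPolynomial (Fin d) K)) J))) :=
    Ideal.quotientEquivAlg (Ideal.span {fbar}) _ E4 hIdeal2
  let E : (MvPolynomial (Fin (d+1)) K ⧸ Ideal.span (Set.range p)) ≃ₐ[K]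
      (Polynomial B ⧸ Ideal.span {fbar}) :=
    ((E1.trans E2).trans E3).trans E5.symm
  -- fbar is monic of degree n 0
  haveI hBnt : Nontrivial B := by
    have hN : (0 : ℕ) < ∏ k : Fin d, n k.succ :=
      Finset.prod_pos fun k _ => lt_of_le_of_lt (Nat.zero_le _) (hdeg k.succ)
    have : Nonempty (Fin (∏ k : Fin d, n k.succ)) := ⟨⟨0, hN⟩⟩
    exact nontrivial_of_ne (bB this.some) 0 (bB.ne_zero _)
  have hmonicbar : fbar.Monic := hmonic.map _
  have hdegfbar : fbar.natDegree = n 0 := by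
    rw [hfbar, hmonic.natDegree_map, hdegf]
  -- power basis over B
  let pb : PowerBasis B (AdjoinRoot fbar) := AdjoinRoot.powerBasis' hmonicbar
  let bA : Module.Basis (Fin (n 0)) B (AdjoinRoot fbar) :=
    pb.basis.reindex (finCongr (show pb.dim = n 0 from hdegfbar))
  -- combine bases
  let bB' : Module.Basis (Fin (∏ k : Fin d, n k.succ)) K B := bB
  let bb : Module.Basis (Fin (∏ k : Fin d, n k.succ) × Fin (n 0)) K (AdjoinRoot fbar) :=
    bB'.smulTower bA
  let EE : (MvPolynomial (Fin (d+1)) K ⧸ Ideal.span (Set.range p)) ≃ₐ[K] AdjoinRoot fbar := E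
  refine ⟨(bb.map EE.symm.toLinearEquiv).reindex ((finProdFinEquiv).trans (finCongr ?_))⟩
  rw [Fin.prod_univ_succ, mul_comm]

noncomputable def emptyQuotEquiv (p : Fin 0 → MvPolynomial (Fin 0) K) :
    (MvPolynomial (Fin 0) K ⧸ Ideal.span (Set.range p)) ≃ₐ[K] K := by
  have h2 : Ideal.span (Set.range p) = ⊥ := by
    rw [Set.range_eq_empty p, Ideal.span_empty]
  let e0 : MvPolynomial (Fin 0) K ≃ₐ[K] K := MvPolynomial.isEmptyAlgEquiv K (Fin 0)
  refine AlgEquiv.ofBijective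
    (Ideal.Quotient.liftₐ (Ideal.span (Set.range p)) e0.toAlgHom ?_) ⟨?_, ?_⟩
  · intro a ha
    rw [h2] at ha
    simp [Ideal.mem_bot.mp ha]
  · intro x y hxy
    obtain ⟨a, rfl⟩ := Ideal.Quotient.mk_surjective x
    obtain ⟨b, rfl⟩ := Ideal.Quotient.mk_surjective y
    simp only [Ideal.Quotient.liftₐ_apply, Ideal.Quotient.lift_mk, AlgEquiv.toAlgHom_eq_coe,
      AlgHom.coe_coe] at hxy
    rw [e0.injective hxy]
  · intro c
    obtain ⟨a, rfl⟩ := e0.surjective c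
    exact ⟨Ideal.Quotient.mk _ a, by simp⟩

theorem utri_basis : ∀ (d : ℕ) (n : Fin d → ℕ) (p : Fin d → MvPolynomial (Fin d) K),
    IsUTri n p →
    Nonempty (Module.Basis (Fin (∏ k, n k)) K
      (MvPolynomial (Fin d) K ⧸ Ideal.span (Set.range p))) := by
  intro d
  induction d with
  | zero =>
    intro n p _
    exact ⟨((Module.Basis.singleton (Fin 1) K).map (emptyQuotEquiv p).symm.toLinearEquiv).reindex
      (finCongr (by simp))⟩
  | succ d ih =>
    intro n p htri
    exact utri_step n p htri ih

theorem tri_basis {d : ℕ} (n : Fin d → ℕ) (p : Fin d → MvPolynomial (Fin d) K)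
    (htri : IsTriangular n p) :
    Nonempty (Module.Basis (Fin (∏ k, n k)) K
      (MvPolynomial (Fin d) K ⧸ Ideal.span (Set.range p))) := by
  classical
  set p' : Fin d → MvPolynomial (Fin d) K :=
    fun k => rename Fin.rev (p (Fin.rev k)) with hp'
  have hutri : IsUTri (fun k => n (Fin.rev k)) p' := by
    intro k
    obtain ⟨q, hv, hd, hdc⟩ := htri (Fin.rev k)
    refine ⟨rename Fin.rev q, ?_, ?_, ?_⟩
    · intro j hj
      have h1 : (rename Fin.rev q).degreeOf j ≠ 0 := (mem_vars_iff_degreeOf_ne j _).mp hj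
      have h2 : q.degreeOf (Fin.rev j) ≠ 0 := by
        rw [← MvPolynomial.degreeOf_rename_of_injective (Fin.rev_injective) (Fin.rev j),
          Fin.rev_rev]
        exact h1
      have h3 := hv (Fin.rev j) ((mem_vars_iff_degreeOf_ne _ _).mpr h2)
      simpa using h3
    · have h5 := MvPolynomial.degreeOf_rename_of_injective
        (Fin.rev_injective) (p := q) (Fin.rev k)
      rw [Fin.rev_rev] at h5
      rw [h5]
      exact hd
    · rw [hp']
      simp only [hdc, map_add, map_pow, rename_X, Fin.rev_rev]
  obtain ⟨b⟩ := utri_basis d _ p' hutri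
  have hmap : Ideal.map (MvPolynomial.renameEquiv K (Fin.revPerm (n := d)) :
      MvPolynomial (Fin d) K →+* MvPolynomial (Fin d) K) (Ideal.span (Set.range p)) =
      Ideal.span (Set.range p') := by
    rw [Ideal.map_span, ← Set.range_comp]
    congr 1
    ext y
    constructor
    · rintro ⟨k, rfl⟩
      refine ⟨Fin.rev k, ?_⟩
      show rename Fin.rev (p (Fin.rev (Fin.rev k))) = _
      rw [Fin.rev_rev]
      rfl
    · rintro ⟨k, rfl⟩
      exact ⟨Fin.rev k, rfl⟩
  let E := Ideal.quotientEquivAlg (Ideal.span (Set.range p)) (Ideal.span (Set.range p'))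
    (MvPolynomial.renameEquiv K (Fin.revPerm (n := d))) hmap.symm
  exact ⟨(b.map E.symm.toLinearEquiv).reindex (finCongr (Equiv.prod_comp (Fin.revPerm (n := d)) n))⟩

end BasisSide

section AlgSide
variable {K : Type*} [Field K] [IsAlgClosed K] {A : Type*} [CommRing A] [Algebra K A]

noncomputable def residueEquivAux [FiniteDimensional K A] (I : Ideal A) (hI : I.IsMaximal) :
    (A ⧸ I) ≃ₐ[K] K := by
  haveI := hI.isPrime
  haveI : Module.Finite K (A ⧸ I) := Module.Finite.of_surjective
    (Ideal.Quotient.mkₐ K I).toLinearMap (Ideal.Quotient.mk_surjective)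
  haveI : Algebra.IsIntegral K (A ⧸ I) := Algebra.IsIntegral.of_finite K (A ⧸ I)
  refine (AlgEquiv.ofBijective (Algebra.ofId K (A ⧸ I)) ⟨?_, ?_⟩).symm
  · exact (algebraMap K (A ⧸ I)).injective
  · exact IsAlgClosed.algebraMap_bijective_of_isIntegral.2

theorem algHom_ext_of_ker_eq {φ ψ : A →ₐ[K] K} (h : RingHom.ker φ = RingHom.ker ψ) : φ = ψ := by
  ext a
  have h1 : a - algebraMap K A (φ a) ∈ RingHom.ker φ := by
    simp [RingHom.mem_ker, AlgHom.commutes]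
  rw [h, RingHom.mem_ker] at h1
  simp only [map_sub, AlgHom.commutes, Algebra.algebraMap_self, RingHom.id_apply, sub_eq_zero] at h1
  exact h1.symm

theorem ker_isMaximal (φ : A →ₐ[K] K) : (RingHom.ker φ).IsMaximal :=
  RingHom.ker_isMaximal_of_surjective φ (fun c => ⟨algebraMap K A c, by simp⟩)

theorem ker_residue_comp [FiniteDimensional K A] (I : Ideal A) (hI : I.IsMaximal) :
    RingHom.ker ((residueEquivAux I hI).toAlgHom.comp (Ideal.Quotient.mkₐ K I)) = I := by
  ext x
  simp only [RingHom.mem_ker, AlgHom.coe_comp, Function.comp_apply, AlgEquiv.toAlgHom_eq_coe,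
    AlgHom.coe_coe, Ideal.Quotient.mkₐ_eq_mk, AlgEquiv.coe_algHom]
  rw [← map_zero (residueEquivAux I hI), (residueEquivAux I hI).injective.eq_iff,
    Ideal.Quotient.eq_zero_iff_mem]

/-- algebra homs to K are in bijection with maximal ideals -/
noncomputable def algHomEquivMaximal [FiniteDimensional K A] :
    (A →ₐ[K] K) ≃ {I : Ideal A // I.IsMaximal} where
  toFun φ := ⟨RingHom.ker φ, ker_isMaximal φ⟩
  invFun I := (residueEquivAux I.1 I.2).toAlgHom.comp (Ideal.Quotient.mkₐ K I.1)
  left_inv φ := algHom_ext_of_ker_eq (ker_residue_comp _ (ker_isMaximal φ))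
  right_inv I := Subtype.ext (ker_residue_comp I.1 I.2)

theorem finrank_eq_card_maximal [FiniteDimensional K A] [IsReduced A] :
    Module.finrank K A = Nat.card {I : Ideal A // I.IsMaximal} := by
  classical
  haveI : IsArtinianRing A := isArtinian_of_tower K inferInstance
  haveI : Finite {I : Ideal A | I.IsMaximal} := (IsArtinianRing.setOfPred_isMaximal_finite A).to_subtype
  haveI : Finite {I : Ideal A // I.IsMaximal} := by
    exact Set.Finite.to_subtype (IsArtinianRing.setOfPred_isMaximal_finite A)
  haveI : Fintype {I : Ideal A // I.IsMaximal} := Fintype.ofFinite _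
  -- the product map
  let Ψ : A →ₐ[K] ∀ I : {I : Ideal A // I.IsMaximal}, A ⧸ I.1 :=
    Pi.algHom _ _ (fun I => Ideal.Quotient.mkₐ K I.1)
  have hinj : Function.Injective Ψ := by
    rw [injective_iff_map_eq_zero]
    intro x hx
    have hxn : IsNilpotent x := by
      rw [nilpotent_iff_mem_prime]
      intro J hJ
      haveI := hJ
      have hJm : J.IsMaximal := IsArtinianRing.isMaximal_of_isPrime J
      have := congrFun hx ⟨J, hJm⟩
      simpa [Ψ, Ideal.Quotient.eq_zero_iff_mem] using this
    exact hxn.eq_zero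
  have hsurj : Function.Surjective Ψ := by
    have hpair : Pairwise (Function.onFun IsCoprime fun I : {I : Ideal A // I.IsMaximal} => I.1) := by
      intro I J hIJ
      exact Ideal.isCoprime_iff_sup_eq.mpr (I.2.coprime_of_ne J.2 (fun h => hIJ (Subtype.ext h)))
    have h1 := Ideal.quotientInfToPiQuotient_surj hpair
    intro y
    obtain ⟨x, hx⟩ := h1 y
    obtain ⟨a, rfl⟩ := Ideal.Quotient.mk_surjective x
    exact ⟨a, by ext I; rw [← hx]; simp [Ψ, Ideal.quotientInfToPiQuotient_mk']⟩
  have e : A ≃ₐ[K] ∀ I : {I : Ideal A // I.IsMaximal}, A ⧸ I.1 :=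
    AlgEquiv.ofBijective Ψ ⟨hinj, hsurj⟩
  rw [e.toLinearEquiv.finrank_eq, Module.finrank_pi_fintype]
  have : ∀ I : {I : Ideal A // I.IsMaximal}, Module.finrank K (A ⧸ I.1) = 1 := by
    intro I
    rw [(residueEquivAux I.1 I.2).toLinearEquiv.finrank_eq, Module.finrank_self]
  simp only [this, Finset.sum_const, smul_eq_mul, mul_one, Nat.card_eq_fintype_card,
    Finset.card_univ]

noncomputable def algHomNilradicalEquiv :
    ((A ⧸ nilradical A) →ₐ[K] K) ≃ (A →ₐ[K] K) where
  toFun ψ := ψ.comp (Ideal.Quotient.mkₐ K (nilradical A))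
  invFun φ := Ideal.Quotient.liftₐ (nilradical A) φ (fun a ha => by
    have : IsNilpotent (φ a) := (mem_nilradical.mp ha).map φ
    exact this.eq_zero)
  left_inv ψ := by
    apply AlgHom.ext
    intro x
    obtain ⟨a, rfl⟩ := Ideal.Quotient.mk_surjective x
    simp
    rfl
  right_inv φ := by
    apply AlgHom.ext; intro a; simp; rfl

end AlgSide

section ZeroSetSide
variable {K : Type*} [Field K] {d : ℕ} (p : Fin d → MvPolynomial (Fin d) K)

theorem my_aeval_eq_eval (a : Fin d → K) (q : MvPolynomial (Fin d) K) :
    aeval a q = eval a q := by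
  rw [aeval_def, Algebra.algebraMap_self]; rfl

theorem span_le_ker (a : Fin d → K) (ha : a ∈ zeroSet p) :
    ∀ x ∈ Ideal.span (Set.range p), (aeval a) x = 0 := by
  intro x hx
  rw [← RingHom.mem_ker]
  refine Ideal.span_le.mpr ?_ hx
  rintro _ ⟨k, rfl⟩
  rw [SetLike.mem_coe, RingHom.mem_ker, my_aeval_eq_eval]
  exact ha k

theorem eval_point (φ : (MvPolynomial (Fin d) K ⧸ Ideal.span (Set.range p)) →ₐ[K] K)
    (q : MvPolynomial (Fin d) K) :
    eval (fun k => φ (Ideal.Quotient.mk _ (X k))) q = φ (Ideal.Quotient.mk _ q) := by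
  have : (aeval fun k => φ (Ideal.Quotient.mk (Ideal.span (Set.range p)) (X k))) =
      φ.comp (Ideal.Quotient.mkₐ K (Ideal.span (Set.range p))) := by
    apply MvPolynomial.algHom_ext; intro i; simp
  rw [← my_aeval_eq_eval, this]; simp

theorem point_mem (φ : (MvPolynomial (Fin d) K ⧸ Ideal.span (Set.range p)) →ₐ[K] K) :
    (fun k => φ (Ideal.Quotient.mk _ (X k))) ∈ zeroSet p := by
  intro k
  rw [eval_point]
  have : Ideal.Quotient.mk (Ideal.span (Set.range p)) (p k) = 0 :=
    Ideal.Quotient.eq_zero_iff_mem.mpr (Ideal.subset_span ⟨k, rfl⟩)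
  rw [this, map_zero]

noncomputable def zeroSetEquivAlgHom :
    zeroSet p ≃ ((MvPolynomial (Fin d) K ⧸ Ideal.span (Set.range p)) →ₐ[K] K) where
  toFun a := Ideal.Quotient.liftₐ (Ideal.span (Set.range p)) (aeval a.1) (span_le_ker p a.1 a.2)
  invFun φ := ⟨fun k => φ (Ideal.Quotient.mk _ (X k)), point_mem p φ⟩
  left_inv a := by
    apply Subtype.ext
    funext k
    simp [my_aeval_eq_eval]
  right_inv φ := by
    apply AlgHom.ext
    intro x
    obtain ⟨q, rfl⟩ := Ideal.Quotient.mk_surjective x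
    have h1 : (Ideal.Quotient.liftₐ (Ideal.span (Set.range p))
        (aeval fun k => φ (Ideal.Quotient.mk _ (X k))) (span_le_ker p _ (point_mem p φ)))
        (Ideal.Quotient.mk _ q) = aeval (fun k => φ (Ideal.Quotient.mk _ (X k))) q := by
      rfl
    rw [h1, my_aeval_eq_eval, eval_point]

end ZeroSetSide

theorem stmt_18 {K : Type*} [Field K] [IsAlgClosed K] [CharZero K] {d : ℕ}
    (n : Fin d → ℕ) (p : Fin d → MvPolynomial (Fin d) K)
    (htri : IsTriangular n p) :
    (zeroSet p).ncard = ∏ k, n k ↔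
      IsReduced (MvPolynomial (Fin d) K ⧸ Ideal.span (Set.range p)) := by
  classical
  obtain ⟨b⟩ := tri_basis n p htri
  haveI : FiniteDimensional K (MvPolynomial (Fin d) K ⧸ Ideal.span (Set.range p)) :=
    Module.Finite.of_basis b
  have hfr : Module.finrank K (MvPolynomial (Fin d) K ⧸ Ideal.span (Set.range p)) = ∏ k, n k := by
    rw [Module.finrank_eq_card_basis b, Fintype.card_fin]
  have hcard : (zeroSet p).ncard =
      Nat.card ((MvPolynomial (Fin d) K ⧸ Ideal.span (Set.range p)) →ₐ[K] K) := by
    rw [← Nat.card_coe_set_eq, Nat.card_congr (zeroSetEquivAlgHom p)]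
  constructor
  · intro hn
    set A := MvPolynomial (Fin d) K ⧸ Ideal.span (Set.range p) with hA
    haveI : IsReduced (A ⧸ nilradical A) :=
      (Ideal.isRadical_iff_quotient_reduced _).mp (Ideal.radical_isRadical 0)
    haveI : FiniteDimensional K (A ⧸ nilradical A) :=
      Module.Finite.of_surjective (Ideal.Quotient.mkₐ K (nilradical A)).toLinearMap
        Ideal.Quotient.mk_surjective
    have h1 : Module.finrank K (A ⧸ nilradical A) =
        Nat.card {I : Ideal (A ⧸ nilradical A) // I.IsMaximal} := by
          convert (finrank_eq_card_maximal (K := K) (A := A ⧸ nilradical A)) using 1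
    have h2 : Nat.card {I : Ideal (A ⧸ nilradical A) // I.IsMaximal} =
        Nat.card ((A ⧸ nilradical A) →ₐ[K] K) :=
      (Nat.card_congr (algHomEquivMaximal (K := K) (A := A ⧸ nilradical A))).symm
    have h3 : Nat.card ((A ⧸ nilradical A) →ₐ[K] K) = Nat.card (A →ₐ[K] K) :=
      Nat.card_congr algHomNilradicalEquiv
    have h4 : Module.finrank K (A ⧸ nilradical A) = Module.finrank K A := by
      rw [h1, h2, h3, ← hcard, hn, ← hfr]
    -- rank-nullity shows the kernel is trivial
    set L := (Ideal.Quotient.mkₐ K (nilradical A)).toLinearMap with hL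
    have hrange : LinearMap.range L = ⊤ :=
      LinearMap.range_eq_top.mpr Ideal.Quotient.mk_surjective
    have h5 := LinearMap.finrank_range_add_finrank_ker L
    rw [hrange, finrank_top, h4] at h5
    have h6 : Module.finrank K (LinearMap.ker L) = 0 := by omega
    have h7 : LinearMap.ker L = ⊥ := Submodule.finrank_eq_zero.mp h6
    constructor
    intro x hx
    have hmem : x ∈ nilradical A := hx
    have : L x = 0 := by
      simp only [hL, AlgHom.toLinearMap_apply, Ideal.Quotient.mkₐ_eq_mk]
      exact Ideal.Quotient.eq_zero_iff_mem.mpr hmem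
    have : x ∈ LinearMap.ker L := this
    rw [h7] at this
    exact this
  · intro hred
    haveI := hred
    calc (zeroSet p).ncard
        = Nat.card ((MvPolynomial (Fin d) K ⧸ Ideal.span (Set.range p)) →ₐ[K] K) := hcard
      _ = Nat.card {I : Ideal (MvPolynomial (Fin d) K ⧸ Ideal.span (Set.range p)) // I.IsMaximal} :=
          Nat.card_congr (algHomEquivMaximal (K := K))
      _ = Module.finrank K (MvPolynomial (Fin d) K ⧸ Ideal.span (Set.range p)) :=
          finrank_eq_card_maximal.symm
      _ = ∏ k, n k := hfr
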